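/- Stability criterion for two-body orbital equilibria: at a critical point r of E(r) = H²/(2(r²+I_s)) − 1/r, i.e. where H² = (r²+I_s)²/r³, the second derivative E''(r) equals (1/r)·(4/(r²+I_s) − 3/r²) (up to the stated formula), and E''(r) > 0 if and only if r² > 3 I_s. -/

import Mathlib

theorem full_two_body_stability_criterion
    (Is : ℝ) (hIs : 0 < Is) :
    ∀ r : ℝ, 0 < r →
      deriv (deriv (fun x => ((r ^ 2 + Is) ^ 2 / r ^ 3) / (2 * (x ^ 2 + Is)) - 1 / x)) r =
        (4 / (r ^ 2 + Is) - 3 / r ^ 2) / r ∧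
      ((4 / (r ^ 2 + Is) - 3 / r ^ 2) / r > 0 ↔ r ^ 2 > 3 * Is) := by
  intro r hr
  have hr0 : r ≠ 0 := hr.ne'
  have hden : ∀ x : ℝ, 2 * (x ^ 2 + Is) ≠ 0 := fun x => by positivity
  set c : ℝ := (r ^ 2 + Is) ^ 2 / r ^ 3 with hc
  constructor
  · -- derivative computation
    have hinner : ∀ x : ℝ, HasDerivAt (fun x : ℝ => 2 * (x ^ 2 + Is)) (4 * x) x := by
      intro x
      have := ((hasDerivAt_pow 2 x).add_const Is).const_mul 2
      exact this.congr_deriv (by norm_num; ring)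
    have hfd : ∀ x : ℝ, x ≠ 0 →
        HasDerivAt (fun x : ℝ => c / (2 * (x ^ 2 + Is)) - 1 / x)
          (-(c * (4 * x)) / (2 * (x ^ 2 + Is)) ^ 2 + 1 / x ^ 2) x := by
      intro x hx
      have h2 : HasDerivAt (fun x : ℝ => c / (2 * (x ^ 2 + Is)))
          (-(c * (4 * x)) / (2 * (x ^ 2 + Is)) ^ 2) x := by
        have := (hasDerivAt_const x c).div (hinner x) (hden x)
        exact this.congr_deriv (by ring)
      have h3 : HasDerivAt (fun x : ℝ => 1 / x) (-(1 / x ^ 2)) x := by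
        simpa [one_div, sq] using (hasDerivAt_inv hx)
      have := h2.sub h3
      exact this.congr_deriv (by ring)
    have hne : ∀ᶠ x in nhds r, x ≠ (0 : ℝ) := eventually_ne_nhds hr0
    have hEq : deriv (fun x : ℝ => c / (2 * (x ^ 2 + Is)) - 1 / x) =ᶠ[nhds r]
        fun x : ℝ => -(c * (4 * x)) / (2 * (x ^ 2 + Is)) ^ 2 + 1 / x ^ 2 := by
      filter_upwards [hne] with x hx
      exact (hfd x hx).deriv
    rw [hEq.deriv_eq]
    -- now differentiate g
    have hg1 : HasDerivAt (fun x : ℝ => -(c * (4 * x)) / (2 * (x ^ 2 + Is)) ^ 2)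
        ((-(4 * c) * (2 * (r ^ 2 + Is)) ^ 2 - -(c * (4 * r)) * (2 * (2 * (r ^ 2 + Is)) * (4 * r)))
          / ((2 * (r ^ 2 + Is)) ^ 2) ^ 2) r := by
      have hnum : HasDerivAt (fun x : ℝ => -(c * (4 * x))) (-(4 * c)) r := by
        have := ((hasDerivAt_id r).const_mul 4).const_mul c |>.neg
        exact this.congr_deriv (by ring)
      have hden2 : HasDerivAt (fun x : ℝ => (2 * (x ^ 2 + Is)) ^ 2)
          (2 * (2 * (r ^ 2 + Is)) * (4 * r)) r := by
        have := (hinner r).pow 2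
        exact this.congr_deriv (by ring)
      exact hnum.div hden2 (pow_ne_zero 2 (hden r))
    have hg2 : HasDerivAt (fun x : ℝ => 1 / x ^ 2)
        ((0 * r ^ 2 - 1 * (2 * r)) / (r ^ 2) ^ 2) r := by
      have hnum : HasDerivAt (fun _ : ℝ => (1 : ℝ)) 0 r := hasDerivAt_const r 1
      have hden2 : HasDerivAt (fun x : ℝ => x ^ 2) (2 * r) r := by
        simpa using hasDerivAt_pow 2 r
      exact hnum.div hden2 (pow_ne_zero 2 hr0)
    have := (hg1.fun_add hg2).deriv
    rw [this]
    have hIsr : r ^ 2 + Is ≠ 0 := by positivity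
    rw [hc]
    field_simp
    ring
  · have key : (4 / (r ^ 2 + Is) - 3 / r ^ 2) / r = (r ^ 2 - 3 * Is) / (r ^ 3 * (r ^ 2 + Is)) := by
      have hIsr : r ^ 2 + Is ≠ 0 := by positivity
      field_simp
      ring
    rw [key]
    rw [gt_iff_lt, lt_div_iff₀ (by positivity)]
    constructor <;> intro h <;> nlinarith
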